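/- (Remark: block-diagonal case.) Let W be a real m×m positive definite matrix, let K₂₂ be a real (n−m)×(n−m) positive semidefinite matrix, and let K be the n×n block-diagonal matrix with diagonal blocks W and K₂₂ (i.e. the off-diagonal block K₂₁ is zero). Let C be the n×m matrix consisting of the first m columns of K, i.e. C = [W; 0]. Let W = VΣVᵀ be a spectral decomposition with V m×m orthogonal and Σ diagonal with positive nonincreasing entries, let r ≤ m, and write V_r for the first r columns of V and Σ_r for the leading r×r block. Then the standard rank-r Nyström approximation G_nys = C V_r Σ_r⁻¹ V_rᵀ Cᵀ is a best rank-r approximation of CW⁻¹Cᵀ in the Frobenius norm: for every real n×n matrix G′ with rank(G′) ≤ r, ‖CW⁻¹Cᵀ − G_nys‖_F ≤ ‖CW⁻¹Cᵀ − G′‖_F. Hence the modified and standard Nyström methods produce the same rank-r approximation of K. -/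

import Mathlib

open Matrix

/-- Frobenius norm of a real matrix: ‖A‖_F = sqrt(trace(Aᵀ A)). -/
noncomputable def frobNorm {α β : Type*} [Fintype α] [Fintype β] (A : Matrix α β ℝ) : ℝ :=
  Real.sqrt (Matrix.trace (Aᵀ * A))


open Module

set_option maxHeartbeats 1000000

lemma exists_kernel_Q {ι : Type*} [Fintype ι] [DecidableEq ι] (B : Matrix ι ι ℝ) :
    ∃ N : ℕ, ∃ Q : Matrix ι (Fin N) ℝ,
      Fintype.card ι ≤ N + B.rank ∧ Qᵀ * Q = 1 ∧ B * Q = 0 := by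
  classical
  set f := B.mulVecLin with hf
  let e : EuclideanSpace ℝ ι ≃ₗ[ℝ] (ι → ℝ) := WithLp.linearEquiv 2 ℝ (ι → ℝ)
  let Ker : Submodule ℝ (EuclideanSpace ℝ ι) := (LinearMap.ker f).map (e.symm : (ι → ℝ) →ₗ[ℝ] EuclideanSpace ℝ ι)
  have hdim : finrank ℝ Ker = finrank ℝ (LinearMap.ker f) :=
    LinearEquiv.finrank_map_eq e.symm (LinearMap.ker f)
  let ob := stdOrthonormalBasis ℝ Ker
  refine ⟨finrank ℝ Ker, Matrix.of (fun i j => ((ob j : Ker) : EuclideanSpace ℝ ι) i), ?_, ?_, ?_⟩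
  · have h1 : finrank ℝ (LinearMap.range f) + finrank ℝ (LinearMap.ker f)
        = finrank ℝ (ι → ℝ) := LinearMap.finrank_range_add_finrank_ker f
    have h2 : finrank ℝ (ι → ℝ) = Fintype.card ι := finrank_pi ℝ
    have h3 : B.rank = finrank ℝ (LinearMap.range f) := rfl
    omega
  · ext j₁ j₂
    have horth := orthonormal_iff_ite.mp ob.orthonormal j₁ j₂
    rw [Submodule.coe_inner, PiLp.inner_apply] at horth
    simp only [RCLike.inner_apply, conj_trivial] at horth
    simp only [Matrix.mul_apply, Matrix.transpose_apply, Matrix.of_apply, Matrix.one_apply]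
    rw [← horth]
    exact Finset.sum_congr rfl fun x _ => mul_comm _ _
  · ext i j
    have hmem : ((ob j : Ker) : EuclideanSpace ℝ ι) ∈ Ker := (ob j).2
    have h1 : e.symm.symm ((ob j : Ker) : EuclideanSpace ℝ ι) ∈ LinearMap.ker f :=
      (Submodule.mem_map_equiv (p := LinearMap.ker f)).mp hmem
    have h2 : f (e.symm.symm ((ob j : Ker) : EuclideanSpace ℝ ι)) = 0 := h1
    have hz : B.mulVec (fun l => ((ob j : Ker) : EuclideanSpace ℝ ι) l) = 0 := h2
    have h3 := congrFun hz i
    simp only [Matrix.mulVec, dotProduct, Pi.zero_apply] at h3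
    simpa [Matrix.mul_apply] using h3

lemma trace_transpose_mul_self_nonneg {ι κ : Type*} [Fintype ι] [Fintype κ]
    (X : Matrix ι κ ℝ) : 0 ≤ Matrix.trace (Xᵀ * X) := by
  have : Matrix.trace (Xᵀ * X) = ∑ j, ∑ i, (X i j) ^ 2 := by
    simp [Matrix.trace, Matrix.diag, Matrix.mul_apply, sq]
  rw [this]
  exact Finset.sum_nonneg fun j _ => Finset.sum_nonneg fun i _ => sq_nonneg _

lemma trace_compress_le {ι : Type*} [Fintype ι] [DecidableEq ι] {N : ℕ}
    (M : Matrix ι ι ℝ) (Q : Matrix ι (Fin N) ℝ) (hQ : Qᵀ * Q = 1) :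
    Matrix.trace ((M * Q)ᵀ * (M * Q)) ≤ Matrix.trace (Mᵀ * M) := by
  set S : Matrix ι ι ℝ := 1 - Q * Qᵀ with hS
  have hSt : Sᵀ = S := by
    simp [hS, transpose_sub, transpose_mul]
  have hS2 : S * S = S := by
    simp only [hS, Matrix.sub_mul, Matrix.mul_sub, Matrix.one_mul, Matrix.mul_one]
    have : Q * Qᵀ * (Q * Qᵀ) = Q * Qᵀ := by
      rw [Matrix.mul_assoc, ← Matrix.mul_assoc Qᵀ, hQ, Matrix.one_mul]
    rw [this]; abel
  have h1 : Matrix.trace ((M * Q)ᵀ * (M * Q)) = Matrix.trace ((Mᵀ * M) * (Q * Qᵀ)) := by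
    calc Matrix.trace ((M * Q)ᵀ * (M * Q))
        = Matrix.trace (Qᵀ * (Mᵀ * (M * Q))) := by simp only [transpose_mul, Matrix.mul_assoc]
      _ = Matrix.trace ((Mᵀ * (M * Q)) * Qᵀ) := Matrix.trace_mul_comm _ _
      _ = Matrix.trace ((Mᵀ * M) * (Q * Qᵀ)) := by simp only [Matrix.mul_assoc]
  have h2 : Matrix.trace ((M * S)ᵀ * (M * S)) = Matrix.trace ((Mᵀ * M) * S) := by
    calc Matrix.trace ((M * S)ᵀ * (M * S))
        = Matrix.trace (Sᵀ * (Mᵀ * (M * S))) := by simp only [transpose_mul, Matrix.mul_assoc]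
      _ = Matrix.trace ((Mᵀ * (M * S)) * Sᵀ) := Matrix.trace_mul_comm _ _
      _ = Matrix.trace ((Mᵀ * M) * (S * Sᵀ)) := by simp only [Matrix.mul_assoc]
      _ = Matrix.trace ((Mᵀ * M) * S) := by rw [hSt, hS2]
  have h3 : Matrix.trace ((Mᵀ * M) * S) = Matrix.trace (Mᵀ * M) - Matrix.trace ((Mᵀ * M) * (Q * Qᵀ)) := by
    rw [hS, Matrix.mul_sub, Matrix.mul_one, Matrix.trace_sub]
  have h4 := trace_transpose_mul_self_nonneg (M * S)
  rw [h2, h3] at h4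
  linarith [h1 ▸ le_refl (Matrix.trace ((M * Q)ᵀ * (M * Q)))]

lemma trace_diagonal_mul' {ι : Type*} [Fintype ι] [DecidableEq ι]
    (g : ι → ℝ) (S : Matrix ι ι ℝ) :
    Matrix.trace (Matrix.diagonal g * S) = ∑ i, g i * S i i := by
  simp [Matrix.trace, Matrix.diag, Matrix.diagonal_mul]

lemma castLE_diag {m r : ℕ} (hrm : r ≤ m) (g : Fin m → ℝ) :
    (1 : Matrix (Fin m) (Fin m) ℝ).submatrix id (Fin.castLE hrm) *
      Matrix.diagonal (fun a : Fin r => g (Fin.castLE hrm a)) *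
      ((1 : Matrix (Fin m) (Fin m) ℝ).submatrix id (Fin.castLE hrm))ᵀ
    = Matrix.diagonal (fun l : Fin m => if (l : ℕ) < r then g l else 0) := by
  ext i j
  have hterm : ∀ a : Fin r,
      ((1 : Matrix (Fin m) (Fin m) ℝ).submatrix id (Fin.castLE hrm) *
        Matrix.diagonal (fun a : Fin r => g (Fin.castLE hrm a))) i a *
      ((1 : Matrix (Fin m) (Fin m) ℝ).submatrix id (Fin.castLE hrm))ᵀ a j
      = (if i = Fin.castLE hrm a then 1 else 0) * g (Fin.castLE hrm a) *
        (if j = Fin.castLE hrm a then 1 else 0) := by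
    intro a
    rw [Matrix.mul_diagonal]
    simp [Matrix.one_apply]
  rw [Matrix.mul_apply]
  simp only [hterm]
  by_cases h : (i : ℕ) < r
  · rw [Finset.sum_eq_single (⟨(i : ℕ), h⟩ : Fin r)]
    · have hci : Fin.castLE hrm (⟨(i : ℕ), h⟩ : Fin r) = i := by
        apply Fin.ext; rfl
      rw [hci]
      simp only [if_pos rfl, one_mul]
      rw [Matrix.diagonal_apply]
      by_cases hji : j = i
      · subst hji; simp [h]
      · simp [hji, Ne.symm hji, fun hij : i = j => hji hij.symm]
    · intro b _ hb
      have : i ≠ Fin.castLE hrm b := by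
        intro hEq
        apply hb
        apply Fin.ext
        have := congrArg Fin.val hEq
        simpa using this.symm
      simp [this]
    · intro habs; exact absurd (Finset.mem_univ _) habs
  · have hzero : ∀ a : Fin r, i ≠ Fin.castLE hrm a := by
      intro a hEq
      apply h
      have := congrArg Fin.val hEq
      simp at this
      omega
    rw [Finset.sum_eq_zero (fun a _ => by simp [hzero a])]
    rw [Matrix.diagonal_apply]
    by_cases hij : i = j
    · subst hij; simp [h]
    · simp [hij]

lemma sum_ite_fin {m r : ℕ} (hrm : r ≤ m) :
    ∑ i : Fin m, (if (i : ℕ) < r then (0 : ℝ) else 1) = ((m - r : ℕ) : ℝ) := by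
  rw [Fin.sum_univ_eq_sum_range (fun x => if x < r then (0 : ℝ) else 1) m,
      Finset.range_eq_Ico, ← Finset.sum_Ico_consecutive _ (Nat.zero_le r) hrm,
      Finset.sum_eq_zero (fun x hx => if_pos (Finset.mem_Ico.mp hx).2), zero_add]
  have h1 : ∀ x ∈ Finset.Ico r m, (if x < r then (0 : ℝ) else 1) = 1 :=
    fun x hx => if_neg (by have := (Finset.mem_Ico.mp hx).1; omega)
  rw [Finset.sum_congr rfl h1, Finset.sum_const, Nat.card_Ico, nsmul_eq_mul, mul_one]

set_option maxHeartbeats 2000000 in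
/-- Block-diagonal case (Remark 1): when K₂₁ = 0, the standard rank-r Nyström approximation
is a best rank-r Frobenius-norm approximation of C W⁻¹ Cᵀ, hence the standard and modified
methods coincide.  Here n = m + k, with indices modelled by `Fin m ⊕ Fin k`. -/
theorem stmt_9 {m k r : ℕ} (hr : 0 < r) (hrm : r ≤ m)
    (W : Matrix (Fin m) (Fin m) ℝ) (hW : W.PosDef)
    (K22 : Matrix (Fin k) (Fin k) ℝ) (hK22 : K22.PosSemidef)
    -- K is block diagonal with blocks W and K₂₂
    (K : Matrix (Fin m ⊕ Fin k) (Fin m ⊕ Fin k) ℝ)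
    (hK : K = Matrix.fromBlocks W 0 0 K22)
    -- C consists of the first m columns of K, i.e. C = [W; 0]
    (C : Matrix (Fin m ⊕ Fin k) (Fin m) ℝ) (hC : C = K.submatrix id Sum.inl)
    -- spectral decomposition W = V Σ Vᵀ with positive nonincreasing eigenvalues
    (V : Matrix (Fin m) (Fin m) ℝ) (d : Fin m → ℝ)
    (hV : Vᵀ * V = 1) (hd : ∀ i, 0 < d i) (hmono : Antitone d)
    (hspec : W = V * Matrix.diagonal d * Vᵀ)
    -- standard rank-r Nyström approximation G_nys = C V_r Σ_r⁻¹ V_rᵀ Cᵀ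
    (Gnys : Matrix (Fin m ⊕ Fin k) (Fin m ⊕ Fin k) ℝ)
    (hGnys : Gnys = C * (V.submatrix id (Fin.castLE hrm) *
        Matrix.diagonal (fun i : Fin r => (d (Fin.castLE hrm i))⁻¹) *
        (V.submatrix id (Fin.castLE hrm))ᵀ) * Cᵀ) :
    ∀ G' : Matrix (Fin m ⊕ Fin k) (Fin m ⊕ Fin k) ℝ, G'.rank ≤ r →
      frobNorm (C * W⁻¹ * Cᵀ - Gnys) ≤ frobNorm (C * W⁻¹ * Cᵀ - G') := by
  
  intro G' hG'
  classical
  have hrm1 : r - 1 < m := by omega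
  set i₀ : Fin m := ⟨r - 1, hrm1⟩ with hi₀
  have hWsymm : Wᵀ = W := by
    rw [hspec]
    simp only [transpose_mul, transpose_transpose, Matrix.diagonal_transpose, Matrix.mul_assoc]
  have hVV : V * Vᵀ = 1 := mul_eq_one_comm.mp hV
  have hdet : IsUnit W.det := isUnit_iff_ne_zero.mpr (ne_of_gt hW.det_pos)
  have hWinv : W * W⁻¹ = 1 := Matrix.mul_nonsing_inv W hdet
  have hCr : C = Matrix.fromRows W 0 := by
    rw [hC, hK]
    ext i j
    cases i with
    | inl i => simp
    | inr i => simp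
  have hCMC : ∀ M : Matrix (Fin m) (Fin m) ℝ,
      C * M * Cᵀ = Matrix.fromBlocks (W * M * W) 0 0 0 := by
    intro M
    rw [hCr, Matrix.transpose_fromRows, Matrix.transpose_zero, Matrix.fromRows_mul,
      Matrix.fromRows_mul_fromCols, hWsymm]
    simp
  have hA : C * W⁻¹ * Cᵀ = Matrix.fromBlocks W 0 0 0 := by
    rw [hCMC W⁻¹, hWinv, Matrix.one_mul]
  have hVcanc : ∀ Z : Matrix (Fin m) (Fin m) ℝ, Vᵀ * (V * Z) = Z := fun Z => by
    rw [← Matrix.mul_assoc, hV, Matrix.one_mul]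
  have hconj : ∀ X Y : Matrix (Fin m) (Fin m) ℝ,
      (V * X * Vᵀ) * (V * Y * Vᵀ) = V * (X * Y) * Vᵀ := by
    intro X Y
    calc (V * X * Vᵀ) * (V * Y * Vᵀ) = V * (X * (Vᵀ * (V * (Y * Vᵀ)))) := by
          simp only [Matrix.mul_assoc]
      _ = V * (X * (Y * Vᵀ)) := by rw [hVcanc]
      _ = V * (X * Y) * Vᵀ := by simp only [Matrix.mul_assoc]
  -- the projected middle matrix
  have hVr : V.submatrix id (Fin.castLE hrm)
      = V * (1 : Matrix (Fin m) (Fin m) ℝ).submatrix id (Fin.castLE hrm) := by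
    ext i j
    rw [Matrix.mul_apply]
    simp [Matrix.one_apply]
  have hP : V.submatrix id (Fin.castLE hrm) *
        Matrix.diagonal (fun i : Fin r => (d (Fin.castLE hrm i))⁻¹) *
        (V.submatrix id (Fin.castLE hrm))ᵀ
      = V * Matrix.diagonal (fun l : Fin m => if (l : ℕ) < r then (d l)⁻¹ else 0) * Vᵀ := by
    rw [hVr, Matrix.transpose_mul]
    calc V * (1 : Matrix (Fin m) (Fin m) ℝ).submatrix id (Fin.castLE hrm) *
          Matrix.diagonal (fun i : Fin r => (d (Fin.castLE hrm i))⁻¹) *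
          (((1 : Matrix (Fin m) (Fin m) ℝ).submatrix id (Fin.castLE hrm))ᵀ * Vᵀ)
        = V * ((1 : Matrix (Fin m) (Fin m) ℝ).submatrix id (Fin.castLE hrm) *
            Matrix.diagonal (fun i : Fin r => (d (Fin.castLE hrm i))⁻¹) *
            ((1 : Matrix (Fin m) (Fin m) ℝ).submatrix id (Fin.castLE hrm))ᵀ) * Vᵀ := by
          simp only [Matrix.mul_assoc]
      _ = V * Matrix.diagonal (fun l : Fin m => if (l : ℕ) < r then (d l)⁻¹ else 0) * Vᵀ := by
          rw [castLE_diag hrm (fun l => (d l)⁻¹)]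
  have hWPW : W * (V * Matrix.diagonal (fun l : Fin m => if (l : ℕ) < r then (d l)⁻¹ else 0) * Vᵀ) * W
      = V * Matrix.diagonal (fun l : Fin m => if (l : ℕ) < r then d l else 0) * Vᵀ := by
    rw [hspec, hconj, hconj, Matrix.diagonal_mul_diagonal, Matrix.diagonal_mul_diagonal]
    exact congrArg (fun X => V * X * Vᵀ) (congrArg Matrix.diagonal (funext fun l => by
      by_cases hl : (l : ℕ) < r
      · rw [if_pos hl, if_pos hl, mul_inv_cancel₀ (hd l).ne', one_mul]
      · rw [if_neg hl, if_neg hl, mul_zero, zero_mul]))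
  have hGnys' : Gnys = Matrix.fromBlocks
      (V * Matrix.diagonal (fun l : Fin m => if (l : ℕ) < r then d l else 0) * Vᵀ) 0 0 0 := by
    rw [hGnys, hCMC, hP, hWPW]
  have hsubW : W - V * Matrix.diagonal (fun l : Fin m => if (l : ℕ) < r then d l else 0) * Vᵀ
      = V * Matrix.diagonal (fun l : Fin m => if (l : ℕ) < r then 0 else d l) * Vᵀ := by
    rw [hspec, ← Matrix.sub_mul, ← Matrix.mul_sub, Matrix.diagonal_sub]
    exact congrArg (fun X => V * X * Vᵀ) (congrArg Matrix.diagonal (funext fun l => by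
      by_cases hl : (l : ℕ) < r
      · rw [if_pos hl, if_pos hl, sub_self]
      · rw [if_neg hl, if_neg hl, sub_zero]))
  have hdiffEq : C * W⁻¹ * Cᵀ - Gnys = Matrix.fromBlocks
      (V * Matrix.diagonal (fun l : Fin m => if (l : ℕ) < r then 0 else d l) * Vᵀ) 0 0 0 := by
    rw [hA, hGnys', ← hsubW]
    ext i j
    cases i <;> cases j <;> simp [Matrix.sub_apply]
  -- trace of the Nyström difference
  have htrace_conj : ∀ g : Fin m → ℝ,
      Matrix.trace (V * Matrix.diagonal g * Vᵀ) = ∑ l, g l := by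
    intro g
    calc Matrix.trace (V * Matrix.diagonal g * Vᵀ)
        = Matrix.trace (Vᵀ * (V * Matrix.diagonal g)) := Matrix.trace_mul_comm _ _
      _ = Matrix.trace (Matrix.diagonal g) := by rw [← Matrix.mul_assoc, hV, Matrix.one_mul]
      _ = ∑ l, g l := Matrix.trace_diagonal g
  have hdsym : ∀ g : Fin m → ℝ, (V * Matrix.diagonal g * Vᵀ)ᵀ = V * Matrix.diagonal g * Vᵀ := by
    intro g
    simp only [transpose_mul, transpose_transpose, Matrix.diagonal_transpose, Matrix.mul_assoc]
  have hleft : Matrix.trace ((C * W⁻¹ * Cᵀ - Gnys)ᵀ * (C * W⁻¹ * Cᵀ - Gnys))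
      = ∑ l : Fin m, (if (l : ℕ) < r then 0 else d l) ^ 2 := by
    rw [hdiffEq, Matrix.fromBlocks_transpose, Matrix.fromBlocks_multiply]
    simp only [Matrix.mul_zero, Matrix.zero_mul, add_zero, zero_add, Matrix.transpose_zero]
    have httr : ∀ (Y : Matrix (Fin m) (Fin m) ℝ),
        Matrix.trace (Matrix.fromBlocks Y (0 : Matrix (Fin m) (Fin k) ℝ)
          (0 : Matrix (Fin k) (Fin m) ℝ) (0 : Matrix (Fin k) (Fin k) ℝ)) = Matrix.trace Y := by
      intro Y
      simp [Matrix.trace, Fintype.sum_sum_type, Matrix.diag]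
    rw [httr, hdsym, hconj, Matrix.diagonal_mul_diagonal, htrace_conj]
    apply Finset.sum_congr rfl
    intro l _
    by_cases hl : (l : ℕ) < r <;> simp [hl, sq]
  -- now the lower bound for an arbitrary G'
  obtain ⟨N, Q, hcard, hQ, hBQ⟩ := exists_kernel_Q G'
  have hcardι : Fintype.card (Fin m ⊕ Fin k) = m + k := by simp
  have hNr : m + k ≤ N + r := by omega
  have hUtU : (Matrix.fromBlocks V 0 0 (1 : Matrix (Fin k) (Fin k) ℝ))ᵀ *
      Matrix.fromBlocks V 0 0 (1 : Matrix (Fin k) (Fin k) ℝ) = 1 := by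
    rw [Matrix.fromBlocks_transpose, Matrix.fromBlocks_multiply]
    simp [hV, Matrix.fromBlocks_one]
  set U : Matrix (Fin m ⊕ Fin k) (Fin m ⊕ Fin k) ℝ :=
    Matrix.fromBlocks V 0 0 (1 : Matrix (Fin k) (Fin k) ℝ) with hU
  have hUUt : U * Uᵀ = 1 := mul_eq_one_comm.mp hUtU
  set lam : Fin m ⊕ Fin k → ℝ := Sum.elim d 0 with hlam
  have hAU : Matrix.fromBlocks W 0 0 (0 : Matrix (Fin k) (Fin k) ℝ)
      = U * Matrix.diagonal lam * Uᵀ := by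
    have hLam : Matrix.diagonal lam
        = Matrix.fromBlocks (Matrix.diagonal d) 0 0 (0 : Matrix (Fin k) (Fin k) ℝ) := by
      rw [hlam]
      calc Matrix.diagonal (Sum.elim d (0 : Fin k → ℝ))
          = Matrix.fromBlocks (Matrix.diagonal d) 0 0 (Matrix.diagonal (0 : Fin k → ℝ)) :=
            (Matrix.fromBlocks_diagonal _ _).symm
        _ = Matrix.fromBlocks (Matrix.diagonal d) 0 0 (0 : Matrix (Fin k) (Fin k) ℝ) := by
            rw [show Matrix.diagonal (0 : Fin k → ℝ) = 0 from Matrix.diagonal_zero]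
    rw [hLam, hU, Matrix.fromBlocks_transpose, Matrix.fromBlocks_multiply,
      Matrix.fromBlocks_multiply]
    simp [hspec]
  set R : Matrix (Fin m ⊕ Fin k) (Fin N) ℝ := Uᵀ * Q with hR
  have hRtR : Rᵀ * R = 1 := by
    rw [hR, Matrix.transpose_mul, transpose_transpose]
    calc Qᵀ * U * (Uᵀ * Q) = Qᵀ * (U * Uᵀ * Q) := by simp only [Matrix.mul_assoc]
      _ = 1 := by rw [hUUt, Matrix.one_mul, hQ]
  set PP : Matrix (Fin m ⊕ Fin k) (Fin m ⊕ Fin k) ℝ := R * Rᵀ with hPP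
  have hPPt : PPᵀ = PP := by rw [hPP, Matrix.transpose_mul, transpose_transpose]
  have hPP2 : PP * PP = PP := by
    rw [hPP]
    calc R * Rᵀ * (R * Rᵀ) = R * (Rᵀ * R) * Rᵀ := by simp only [Matrix.mul_assoc]
      _ = R * Rᵀ := by rw [hRtR, Matrix.mul_one]
  have hitt : ∀ i, PP i i = ∑ j, (PP i j) ^ 2 := by
    intro i
    conv_lhs => rw [← hPP2]
    rw [Matrix.mul_apply]
    apply Finset.sum_congr rfl
    intro j _
    have h := congrFun (congrFun hPPt i) j
    rw [Matrix.transpose_apply] at h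
    rw [sq, ← h]
  have ht0 : ∀ i, 0 ≤ PP i i := fun i =>
    (hitt i) ▸ Finset.sum_nonneg (fun j _ => sq_nonneg _)
  have ht1 : ∀ i, PP i i ≤ 1 := by
    intro i
    have hge : (PP i i) ^ 2 ≤ PP i i := by
      conv_rhs => rw [hitt i]
      exact Finset.single_le_sum (f := fun j => (PP i j) ^ 2) (fun j _ => sq_nonneg _)
        (Finset.mem_univ i)
    nlinarith [ht0 i]
  have hsumt : ∑ i, PP i i = (N : ℝ) := by
    have h1 : ∑ i, PP i i = Matrix.trace PP := rfl
    rw [h1, hPP, Matrix.trace_mul_comm, hRtR, Matrix.trace_one]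
    simp
  have hMQ : (C * W⁻¹ * Cᵀ - G') * Q = U * (Matrix.diagonal lam * R) := by
    rw [Matrix.sub_mul, hBQ, sub_zero, hA, hAU]
    simp only [hR, Matrix.mul_assoc]
  have htr : Matrix.trace (((C * W⁻¹ * Cᵀ - G') * Q)ᵀ * ((C * W⁻¹ * Cᵀ - G') * Q))
      = ∑ i, lam i * lam i * PP i i := by
    rw [hMQ]
    calc Matrix.trace ((U * (Matrix.diagonal lam * R))ᵀ * (U * (Matrix.diagonal lam * R)))
        = Matrix.trace ((Matrix.diagonal lam * R)ᵀ * (Uᵀ * U * (Matrix.diagonal lam * R))) := by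
          simp only [Matrix.transpose_mul, Matrix.mul_assoc]
      _ = Matrix.trace ((Matrix.diagonal lam * R)ᵀ * (Matrix.diagonal lam * R)) := by
          rw [hUtU, Matrix.one_mul]
      _ = Matrix.trace (Rᵀ * (Matrix.diagonal lam * (Matrix.diagonal lam * R))) := by
          simp only [Matrix.transpose_mul, Matrix.diagonal_transpose, Matrix.mul_assoc]
      _ = Matrix.trace ((Matrix.diagonal lam * (Matrix.diagonal lam * R)) * Rᵀ) :=
          Matrix.trace_mul_comm _ _
      _ = Matrix.trace (Matrix.diagonal lam * Matrix.diagonal lam * PP) := by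
          rw [hPP]; simp only [Matrix.mul_assoc]
      _ = ∑ i, lam i * lam i * PP i i := by
          rw [Matrix.diagonal_mul_diagonal, trace_diagonal_mul']
  -- the weighted sum bound
  set s : Fin m ⊕ Fin k → ℝ :=
    Sum.elim (fun l : Fin m => if (l : ℕ) < r then (0 : ℝ) else 1) (fun _ => (1 : ℝ)) with hs
  have hc0 : 0 ≤ d i₀ * d i₀ := le_of_lt (mul_pos (hd i₀) (hd i₀))
  have key : ∀ i, d i₀ * d i₀ * (PP i i - s i) ≤ lam i * lam i * PP i i - lam i * lam i * s i := by
    intro i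
    cases i with
    | inl l =>
      by_cases hl : (l : ℕ) < r
      · have h1 : d i₀ ≤ d l := hmono (by rw [Fin.le_def]; simp [hi₀]; omega)
        have h2 : d i₀ * d i₀ ≤ d l * d l := mul_le_mul h1 h1 (hd i₀).le (hd l).le
        have h3 := mul_le_mul_of_nonneg_right h2 (ht0 (Sum.inl l))
        simp only [hs, hlam, Sum.elim_inl, hl, if_pos]
        nlinarith [h3]
      · have h1 : d l ≤ d i₀ := hmono (by rw [Fin.le_def]; simp [hi₀]; omega)
        have h2 : d l * d l ≤ d i₀ * d i₀ := mul_le_mul h1 h1 (hd l).le (hd i₀).le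
        have h4 : PP (Sum.inl l) (Sum.inl l) - 1 ≤ 0 := by linarith [ht1 (Sum.inl l)]
        have h3 := mul_le_mul_of_nonpos_right h2 h4
        simp only [hs, hlam, Sum.elim_inl, hl, if_neg, if_false]
        nlinarith [h3]
    | inr j =>
      have h3 := mul_nonneg hc0 (sub_nonneg.mpr (ht1 (Sum.inr j)))
      simp only [hs, hlam, Sum.elim_inr, Pi.zero_apply]
      nlinarith [h3]
  have hsums : ∑ i, s i = ((m - r : ℕ) : ℝ) + k := by
    rw [Fintype.sum_sum_type]
    simp only [hs, Sum.elim_inl, Sum.elim_inr]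
    rw [sum_ite_fin hrm]
    simp
  have hTs : ∑ i, lam i * lam i * s i
      = ∑ l : Fin m, (if (l : ℕ) < r then 0 else d l) ^ 2 := by
    rw [Fintype.sum_sum_type]
    simp only [hs, hlam, Sum.elim_inl, Sum.elim_inr, Pi.zero_apply]
    have h2 : ∑ j : Fin k, (0 : ℝ) * 0 * 1 = 0 := by simp
    rw [h2, add_zero]
    apply Finset.sum_congr rfl
    intro l _
    by_cases hl : (l : ℕ) < r <;> simp [hl, sq]
  have hsumdiff : (0 : ℝ) ≤ ∑ i, PP i i - ∑ i, s i := by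
    rw [hsumt, hsums]
    have : (m - r : ℕ) + k ≤ N := by omega
    have hcast : ((m - r : ℕ) : ℝ) + k ≤ (N : ℝ) := by exact_mod_cast this
    linarith
  have hbound : ∑ l : Fin m, (if (l : ℕ) < r then 0 else d l) ^ 2
      ≤ ∑ i, lam i * lam i * PP i i := by
    have hsum : ∑ i, d i₀ * d i₀ * (PP i i - s i)
        ≤ ∑ i, (lam i * lam i * PP i i - lam i * lam i * s i) :=
      Finset.sum_le_sum (fun i _ => key i)
    have e1 : ∑ i, d i₀ * d i₀ * (PP i i - s i)
        = d i₀ * d i₀ * (∑ i, PP i i - ∑ i, s i) := by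
      rw [← Finset.mul_sum, Finset.sum_sub_distrib]
    have e2 : ∑ i, (lam i * lam i * PP i i - lam i * lam i * s i)
        = (∑ i, lam i * lam i * PP i i) - ∑ i, lam i * lam i * s i :=
      Finset.sum_sub_distrib _ _
    rw [e1, e2, hTs] at hsum
    linarith [mul_nonneg hc0 hsumdiff]
  -- put everything together
  have hcompress := trace_compress_le (C * W⁻¹ * Cᵀ - G') Q hQ
  rw [htr] at hcompress
  show Real.sqrt _ ≤ Real.sqrt _
  apply Real.sqrt_le_sqrt
  rw [hleft]
  exact le_trans hbound hcompress
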